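/- Let k ≥ 1 and s ≥ 1 be integers and let P₁,…,P_s ∈ ℝ[X₁,…,X_k] have total degree at most 1. Then every realization R(σ) of a sign condition has finitely many connected components, and the sum over all realizable sign conditions σ of the number of connected components of R(σ) is at most Σ_{i=0}^{k} Σ_{j=0}^{k−i} C(s, i)·C(s−i, j), where C(n, m) denotes the binomial coefficient. -/

import Mathlib

open Finset

def hh (m n : ℕ) : ℕ := ∑ j ∈ Finset.range (n+1), m.choose j
def gg (s k : ℕ) : ℕ := ∑ i ∈ Finset.range (k+1), s.choose i * hh (s-i) (k-i)

lemma hh_zero_right (m : ℕ) : hh m 0 = 1 := by simp [hh]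

lemma hh_mono {m m' : ℕ} (h : m ≤ m') (n : ℕ) : hh m n ≤ hh m' n :=
  Finset.sum_le_sum fun j _ => Nat.choose_le_choose j h

lemma hh_succ (m n : ℕ) : hh (m+1) (n+1) = hh m (n+1) + hh m n := by
  induction n with
  | zero => simp [hh, Finset.sum_range_succ]; omega
  | succ n ih =>
    have e1 : hh (m+1) (n+1+1) = hh (m+1) (n+1) + (m+1).choose (n+1+1) :=
      Finset.sum_range_succ _ _
    have e2 : hh m (n+1+1) = hh m (n+1) + m.choose (n+1+1) := Finset.sum_range_succ _ _
    have e3 : hh m (n+1) = hh m n + m.choose (n+1) := Finset.sum_range_succ _ _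
    have e4 : (m+1).choose (n+1+1) = m.choose (n+1) + m.choose (n+1+1) :=
      Nat.choose_succ_succ _ _
    omega

lemma gg_mono_s (s k : ℕ) : gg s k ≤ gg (s+1) k := by
  refine Finset.sum_le_sum fun i _ => Nat.mul_le_mul (Nat.choose_le_choose i (by omega))
    (hh_mono (by omega) _)

lemma gg_rec (s k : ℕ) (hk : 1 ≤ k) : gg s k + 2 * gg s (k-1) ≤ gg (s+1) k := by
  obtain ⟨k', rfl⟩ : ∃ k', k = k' + 1 := ⟨k - 1, by omega⟩
  simp only [Nat.add_sub_cancel]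
  have peel : gg (s+1) (k'+1) = hh (s+1) (k'+1)
      + (∑ i ∈ Finset.range (k'+1), s.choose i * hh (s-i) (k'-i)
        + ∑ i ∈ Finset.range (k'+1), s.choose (i+1) * hh (s-i) (k'-i)) := by
    rw [gg, Finset.sum_range_succ']
    simp only [Nat.choose_zero_right, one_mul, Nat.succ_sub_succ, Nat.choose_succ_succ,
      Nat.sub_zero, add_mul, Finset.sum_add_distrib]
    ring
  have peel2 : gg s (k'+1) = hh s (k'+1)
      + ∑ i ∈ Finset.range (k'+1), s.choose (i+1) * hh (s-(i+1)) (k'-i) := by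
    rw [gg, Finset.sum_range_succ']
    simp only [Nat.choose_zero_right, one_mul, Nat.succ_sub_succ, Nat.sub_zero]
    rw [add_comm]
  -- the middle sum equals gg s k'
  have mid : ∑ i ∈ Finset.range (k'+1), s.choose i * hh (s-i) (k'-i) = gg s k' := rfl
  -- bound the last sum from below
  have last : ∑ i ∈ Finset.range (k'+1), s.choose (i+1) * hh (s-(i+1)) (k'-i)
      + ∑ i ∈ Finset.range k', s.choose (i+1) * hh (s-(i+1)) (k'-(i+1))
      ≤ ∑ i ∈ Finset.range (k'+1), s.choose (i+1) * hh (s-i) (k'-i) := by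
    rw [Finset.sum_range_succ, Finset.sum_range_succ (n := k')
      (f := fun i => s.choose (i+1) * hh (s-i) (k'-i)), add_right_comm]
    gcongr ?_ + ?_
    · rw [← Finset.sum_add_distrib]
      refine Finset.sum_le_sum fun i hi => ?_
      rw [Finset.mem_range] at hi
      rcases le_or_gt s i with hs | hs
      · simp [Nat.choose_eq_zero_of_lt (by omega : s < i + 1)]
      · have : s - i = (s - (i+1)) + 1 := by omega
        rw [this, ← mul_add]
        have hki : k' - i = (k' - (i+1)) + 1 := by omega
        rw [hki, hh_succ]
    · have h1 : k' - k' = 0 := by omega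
      rw [h1, hh_zero_right, hh_zero_right]
  -- gg s k' lower bound from its peeled form
  have peel3 : gg s k' = hh s k'
      + ∑ i ∈ Finset.range k', s.choose (i+1) * hh (s-(i+1)) (k'-(i+1)) := by
    rw [gg, Finset.sum_range_succ']
    simp only [Nat.choose_zero_right, one_mul, Nat.succ_sub_succ, Nat.sub_zero]
    rw [add_comm]
  have hs1 : hh s (k'+1) + hh s k' ≤ hh (s+1) (k'+1) := le_of_eq (hh_succ s k').symm
  omega

lemma hh_zero_left (n : ℕ) : hh 0 n = 1 := by
  induction n with
  | zero => simp [hh]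
  | succ n ih => rw [hh, Finset.sum_range_succ, ← hh, ih, Nat.choose_zero_succ]

lemma gg_zero_left (k : ℕ) : gg 0 k = 1 := by
  rw [gg, Finset.sum_range_succ']
  simp [hh_zero_left, Nat.choose_zero_succ]

open Finset

variable {V : Type} [AddCommGroup V] [Module ℝ V]

def SCa {s : ℕ} (f : Fin s → V →ᵃ[ℝ] ℝ) (σ : Fin s → SignType) : Set V :=
  {x | ∀ i, SignType.sign (f i x) = σ i}

lemma signSet_convex (c : SignType) : Convex ℝ {t : ℝ | SignType.sign t = c} := by
  cases c
  · have h : {t : ℝ | SignType.sign t = SignType.zero} = {(0:ℝ)} := by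
      ext t; simp [sign_eq_zero_iff]
    rw [h]; exact convex_singleton 0
  · have h : {t : ℝ | SignType.sign t = SignType.neg} = Set.Iio (0:ℝ) := by
      ext t; simpa using sign_eq_neg_one_iff (a := t)
    rw [h]; exact convex_Iio 0
  · have h : {t : ℝ | SignType.sign t = SignType.pos} = Set.Ioi (0:ℝ) := by
      ext t; simpa using sign_eq_one_iff (a := t)
    rw [h]; exact convex_Ioi 0

lemma SCa_convex {s : ℕ} (f : Fin s → V →ᵃ[ℝ] ℝ) (σ : Fin s → SignType) :
    Convex ℝ (SCa f σ) := by
  have h : SCa f σ = ⋂ i, (f i) ⁻¹' {t : ℝ | SignType.sign t = σ i} := by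
    ext x; simp [SCa, Set.mem_iInter]
  rw [h]
  exact convex_iInter fun i => (signSet_convex (σ i)).affine_preimage (f i)

noncomputable def cnt {s : ℕ} (f : Fin s → V →ᵃ[ℝ] ℝ) : ℕ :=
  Nat.card {σ : Fin s → SignType // (SCa f σ).Nonempty}

lemma cnt_eq {s : ℕ} (f : Fin s → V →ᵃ[ℝ] ℝ)
    [DecidablePred fun σ : Fin s → SignType => (SCa f σ).Nonempty] :
    cnt f = (Finset.univ.filter fun σ : Fin s → SignType => (SCa f σ).Nonempty).card := by
  rw [cnt, Nat.card_eq_fintype_card, Fintype.card_subtype]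

-- decomposition of an affine map to the scalars
lemma affine_apply (φ : V →ᵃ[ℝ] ℝ) (x : V) : φ x = φ.linear x + φ 0 := by
  have := φ.map_vadd (0 : V) x
  simpa using this

lemma affine_add (φ : V →ᵃ[ℝ] ℝ) (a b : V) : φ (a + b) = φ.linear a + φ b := by
  have := φ.map_vadd b a
  simpa [vadd_eq_add] using this

lemma cnt_le (s : ℕ) : ∀ (V : Type) [AddCommGroup V] [Module ℝ V] [FiniteDimensional ℝ V]
    (f : Fin s → V →ᵃ[ℝ] ℝ), cnt f ≤ gg s (Module.finrank ℝ V) := by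
  induction s with
  | zero =>
    intro V _ _ _ f
    classical
    have h1 : cnt f ≤ (Finset.univ : Finset (Fin 0 → SignType)).card := by
      rw [cnt_eq f]
      exact Finset.card_le_card (Finset.filter_subset _ _)
    have h2 : (Finset.univ : Finset (Fin 0 → SignType)).card = 1 := by
      simp
    have h3 : gg 0 (Module.finrank ℝ V) = 1 := gg_zero_left _
    omega
  | succ s ih =>
    intro V _ _ _ f
    classical
    set k := Module.finrank ℝ V with hk
    set φ := f (Fin.last s) with hφdef
    set f' : Fin s → V →ᵃ[ℝ] ℝ := fun i => f i.castSucc with hf'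
    by_cases hφ : φ.linear = 0
    · -- the last polynomial is constant
      refine le_trans ?_ (le_trans (ih V f') (gg_mono_s s k))
      rw [cnt_eq f, cnt_eq f']
      refine Finset.card_le_card_of_injOn (fun σ => σ ∘ Fin.castSucc) ?_ ?_
      · intro σ hσ
        replace hσ : σ ∈ Finset.univ.filter (fun σ => (SCa f σ).Nonempty) := hσ
        simp only [Finset.coe_filter, Finset.mem_filter, Finset.mem_univ, true_and,
          Set.mem_setOf_eq] at hσ ⊢
        obtain ⟨x, hx⟩ := hσ
        exact ⟨x, fun i => hx i.castSucc⟩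
      · intro σ hσ τ hτ hστ
        simp only [Finset.coe_filter, Set.mem_setOf_eq] at hσ hτ
        obtain ⟨x, hx⟩ := hσ.2
        obtain ⟨y, hy⟩ := hτ.2
        have hlast : σ (Fin.last s) = τ (Fin.last s) := by
          rw [← hx (Fin.last s), ← hy (Fin.last s)]
          rw [show f (Fin.last s) = φ from rfl, affine_apply φ x, affine_apply φ y, hφ]
          simp
        funext i
        refine Fin.lastCases hlast (fun j => ?_) i
        exact congrFun hστ j
    · -- the last polynomial is a genuine affine function; cut by its zero set
      obtain ⟨v, hv⟩ : ∃ v, φ.linear v ≠ 0 := by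
        by_contra h
        push_neg at h
        exact hφ (LinearMap.ext h)
      set x₀ : V := (-(φ 0) / φ.linear v) • v with hx₀def
      have hx₀ : φ x₀ = 0 := by
        rw [affine_apply, hx₀def, map_smul, smul_eq_mul, div_mul_cancel₀ _ hv]
        ring
      set W := LinearMap.ker φ.linear with hW
      -- the affine family on the hyperplane
      set f'' : Fin s → W →ᵃ[ℝ] ℝ := fun i =>
        { toFun := fun w => f' i (x₀ + ↑w)
          linear := (f' i).linear.comp W.subtype
          map_vadd' := by
            intro p w
            show f' i (x₀ + ↑(w + p)) = (f' i).linear ↑w + f' i (x₀ + ↑p)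
            rw [Submodule.coe_add, show x₀ + ((w:V) + ↑p) = ↑w + (x₀ + ↑p) by abel]
            exact affine_add (f' i) _ _ } with hf''
      have happ : ∀ (i : Fin s) (w : W), f'' i w = f' i (x₀ + ↑w) := fun i w => rfl
      -- rank computations
      have hrange : LinearMap.range φ.linear = ⊤ := by
        rw [LinearMap.range_eq_top]
        intro r
        exact ⟨(r / φ.linear v) • v, by rw [map_smul, smul_eq_mul, div_mul_cancel₀ _ hv]⟩
      have hrank : Module.finrank ℝ W + 1 = k := by
        have := LinearMap.finrank_range_add_finrank_ker φ.linear
        rw [hrange, finrank_top, Module.finrank_self, ← hW] at this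
        omega
      -- correspondence between realizability on the hyperplane and with last sign 0
      have corr : ∀ σ' : Fin s → SignType,
          (SCa f'' σ').Nonempty ↔ (SCa f (Fin.snoc σ' 0)).Nonempty := by
        intro σ'
        constructor
        · rintro ⟨w, hw⟩
          refine ⟨x₀ + ↑w, fun i => ?_⟩
          refine Fin.lastCases ?_ (fun j => ?_) i
          · have : φ (x₀ + ↑w) = 0 := by
              rw [add_comm, affine_add, (LinearMap.mem_ker.mp w.2 : φ.linear ↑w = 0), hx₀]
              simp
            rw [show f (Fin.last s) = φ from rfl, this, Fin.snoc_last]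
            simp
          · rw [show f j.castSucc = f' j from rfl, ← happ j w, Fin.snoc_castSucc]
            exact hw j
        · rintro ⟨x, hx⟩
          have hφx : φ x = 0 := by
            have := hx (Fin.last s)
            rw [show f (Fin.last s) = φ from rfl, Fin.snoc_last] at this
            exact sign_eq_zero_iff.mp this
          have hmem : x - x₀ ∈ W := by
            rw [hW, LinearMap.mem_ker]
            have h2 := affine_add φ (x - x₀) x₀
            rw [show x - x₀ + x₀ = x by abel, hφx, hx₀, add_zero] at h2
            exact h2.symm
          refine ⟨⟨x - x₀, hmem⟩, fun j => ?_⟩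
          rw [happ]
          have h3 : x₀ + (x - x₀) = x := by abel
          rw [show (↑(⟨x - x₀, hmem⟩ : W) : V) = x - x₀ from rfl, h3]
          have := hx j.castSucc
          rwa [show f j.castSucc = f' j from rfl, Fin.snoc_castSucc] at this
      -- counting
      set T := Finset.univ.filter (fun σ : Fin (s+1) → SignType => (SCa f σ).Nonempty) with hT
      set A := Finset.univ.filter (fun σ' : Fin s → SignType => (SCa f' σ').Nonempty) with hA
      set B := Finset.univ.filter (fun σ' : Fin s → SignType => (SCa f'' σ').Nonempty) with hB
      have hmapsto : ∀ σ ∈ T, (σ ∘ Fin.castSucc) ∈ A := by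
        intro σ hσ
        simp only [hT, hA, Finset.mem_filter, Finset.mem_univ, true_and] at hσ ⊢
        obtain ⟨x, hx⟩ := hσ
        exact ⟨x, fun j => hx j.castSucc⟩
      have hfib : ∀ σ' ∈ A, (T.filter fun σ => σ ∘ Fin.castSucc = σ').card
          ≤ 1 + 2 * (if σ' ∈ B then 1 else 0) := by
        intro σ' _
        by_cases hσB : σ' ∈ B
        · rw [if_pos hσB]
          have h3 : (T.filter fun σ => σ ∘ Fin.castSucc = σ').card
              ≤ (Finset.univ : Finset SignType).card := by
            refine Finset.card_le_card_of_injOn (fun σ => σ (Fin.last s))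
              (fun _ _ => Finset.mem_univ _) ?_
            intro σ hσ τ hτ h
            simp only [Finset.coe_filter, Set.mem_setOf_eq] at hσ hτ
            funext i
            refine Fin.lastCases h (fun j => ?_) i
            rw [show σ j.castSucc = (σ ∘ Fin.castSucc) j from rfl, hσ.2,
              show τ j.castSucc = (τ ∘ Fin.castSucc) j from rfl, hτ.2]
          exact h3.trans (by decide)
        · rw [if_neg hσB]
          rw [mul_zero, add_zero]
          refine Finset.card_le_one.mpr ?_
          intro σ hσmem τ hτmem
          rw [Finset.mem_filter] at hσmem hτmem
          obtain ⟨hσT, hσi⟩ := hσmem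
          obtain ⟨hτT, hτi⟩ := hτmem
          rw [hT, Finset.mem_filter] at hσT hτT
          obtain ⟨-, xσ, hxσ⟩ := hσT
          obtain ⟨-, yτ, hyτ⟩ := hτT
          -- no realizable extension of σ' has last sign 0
          have hno : ∀ z : V, z ∈ SCa f (Fin.snoc σ' 0) → False := by
            intro z hz
            refine hσB ?_
            rw [hB, Finset.mem_filter]
            exact ⟨Finset.mem_univ _, (corr σ').mpr ⟨z, hz⟩⟩
          -- convexity: can't have both signs +1 and -1 on the last function
          have hmid : ∀ (x y : V), x ∈ SCa f (Fin.snoc σ' 1) → y ∈ SCa f (Fin.snoc σ' (-1))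
              → False := by
            intro x y hx hy
            have hφx : 0 < φ x := by
              have h5 := hx (Fin.last s)
              rw [Fin.snoc_last] at h5
              exact sign_eq_one_iff.mp h5
            have hφy : φ y < 0 := by
              have h5 := hy (Fin.last s)
              rw [Fin.snoc_last] at h5
              exact sign_eq_neg_one_iff.mp h5
            have hsub : 0 < φ x - φ y := by linarith
            set t : ℝ := φ x / (φ x - φ y) with htdef
            have ht0 : 0 ≤ t := le_of_lt (div_pos hφx hsub)
            have ht1 : t ≤ 1 := by rw [div_le_one hsub]; linarith
            set z := AffineMap.lineMap x y t with hzdef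
            have hφz : φ z = 0 := by
              rw [hzdef, AffineMap.apply_lineMap, AffineMap.lineMap_apply]
              simp only [smul_eq_mul, vsub_eq_sub, vadd_eq_add]
              rw [htdef]
              field_simp
              ring
            have hzmem : z ∈ SCa f' σ' := by
              have hxm : x ∈ SCa f' σ' := fun j => by
                have h6 := hx j.castSucc; rwa [Fin.snoc_castSucc] at h6
              have hym : y ∈ SCa f' σ' := fun j => by
                have h6 := hy j.castSucc; rwa [Fin.snoc_castSucc] at h6
              have hseg : z ∈ segment ℝ x y := by
                rw [segment_eq_image_lineMap]
                exact ⟨t, ⟨ht0, ht1⟩, rfl⟩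
              exact (SCa_convex f' σ').segment_subset hxm hym hseg
            refine hno z (fun i => ?_)
            refine Fin.lastCases ?_ (fun j => ?_) i
            · rw [Fin.snoc_last, show f (Fin.last s) = φ from rfl, hφz]
              simp
            · rw [Fin.snoc_castSucc]
              exact hzmem j
          have hσeq : σ = Fin.snoc σ' (σ (Fin.last s)) := by
            rw [← hσi]; exact (Fin.snoc_init_self σ).symm
          have hτeq : τ = Fin.snoc σ' (τ (Fin.last s)) := by
            rw [← hτi]; exact (Fin.snoc_init_self τ).symm
          have hσ0 : σ (Fin.last s) ≠ SignType.zero := by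
            intro h0
            refine hno xσ ?_
            rw [hσeq, h0] at hxσ
            exact hxσ
          have hτ0 : τ (Fin.last s) ≠ SignType.zero := by
            intro h0
            refine hno yτ ?_
            rw [hτeq, h0] at hyτ
            exact hyτ
          by_cases hab : σ (Fin.last s) = τ (Fin.last s)
          · rw [hσeq, hτeq, hab]
          · exfalso
            rcases haval : σ (Fin.last s) with _ | _ | _
            · exact hσ0 haval
            · rcases hbval : τ (Fin.last s) with _ | _ | _
              · exact hτ0 hbval
              · exact hab (haval.trans hbval.symm)
              · refine hmid yτ xσ ?_ ?_
                · rw [hτeq, hbval] at hyτ; exact hyτ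
                · rw [hσeq, haval] at hxσ; exact hxσ
            · rcases hbval : τ (Fin.last s) with _ | _ | _
              · exact hτ0 hbval
              · refine hmid xσ yτ ?_ ?_
                · rw [hσeq, haval] at hxσ; exact hxσ
                · rw [hτeq, hbval] at hyτ; exact hyτ
              · exact hab (haval.trans hbval.symm)
      have hcard : T.card ≤ A.card + 2 * B.card := by
        rw [Finset.card_eq_sum_card_fiberwise hmapsto]
        calc ∑ σ' ∈ A, (T.filter fun σ => σ ∘ Fin.castSucc = σ').card
            ≤ ∑ σ' ∈ A, (1 + 2 * (if σ' ∈ B then 1 else 0)) := Finset.sum_le_sum hfib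
          _ = A.card + 2 * ∑ σ' ∈ A, (if σ' ∈ B then 1 else 0) := by
              rw [Finset.sum_add_distrib, Finset.sum_const, smul_eq_mul, mul_one,
                ← Finset.mul_sum]
          _ ≤ A.card + 2 * B.card := by
              have h7 : ∑ σ' ∈ A, (if σ' ∈ B then 1 else 0) ≤ B.card := by
                rw [← Finset.card_filter]
                exact Finset.card_le_card (fun x hx => (Finset.mem_filter.mp hx).2)
              omega
      have e1 : cnt f = T.card := by rw [cnt_eq f, hT]
      have e2 : cnt f' = A.card := by rw [cnt_eq f', hA]
      have e3 : cnt f'' = B.card := by rw [cnt_eq f'', hB]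
      have i1 := ih V f'
      rw [← hk] at i1
      have i2 := ih W f''
      have e4 : Module.finrank ℝ (↥W) = k - 1 := by omega
      rw [e4] at i2
      have hrec := gg_rec s k (by omega)
      omega

/-- The realization of the sign condition `σ` for the family of polynomials `P`. -/
def SignRealization {k s : ℕ} (P : Fin s → MvPolynomial (Fin k) ℝ)
    (σ : Fin s → SignType) : Set (Fin k → ℝ) :=
  {x | ∀ i, SignType.sign (MvPolynomial.eval x (P i)) = σ i}

open MvPolynomial in
lemma eval_deg_le_one {k : ℕ} (p : MvPolynomial (Fin k) ℝ) (hp : p.totalDegree ≤ 1)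
    (x : Fin k → ℝ) :
    eval x p = p.coeff 0 + ∑ i, p.coeff (Finsupp.single i 1) * x i := by
  classical
  have hsupp : p.support ⊆ insert 0 (Finset.univ.image fun i => Finsupp.single i 1) := by
    intro d hd
    have hdeg : (d.sum fun _ e => e) ≤ 1 := le_trans (le_totalDegree hd) hp
    rcases eq_or_ne d 0 with h0 | h0
    · simp [h0]
    · obtain ⟨i, hi⟩ : ∃ i, d i ≠ 0 := by
        by_contra hc; push_neg at hc; exact h0 (Finsupp.ext fun a => hc a)
      have hmem : i ∈ d.support := Finsupp.mem_support_iff.mpr hi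
      have hsum : ∑ j ∈ d.support, d j ≤ 1 := hdeg
      have hdi : d i = 1 := by
        have h1 : d i ≤ ∑ j ∈ d.support, d j :=
          Finset.single_le_sum (fun j _ => Nat.zero_le _) hmem
        omega
      have hd' : d = Finsupp.single i 1 := by
        ext j
        rcases eq_or_ne j i with rfl | hj
        · simp [hdi]
        · rw [Finsupp.single_apply, if_neg (fun h => hj h.symm)]
          by_contra hz
          have hjm : j ∈ d.support := Finsupp.mem_support_iff.mpr hz
          have h2 : d i + d j ≤ ∑ l ∈ d.support, d l := by
            have hsub : ({i, j} : Finset (Fin k)) ⊆ d.support := by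
              intro l hl
              rcases Finset.mem_insert.mp hl with rfl | hl
              · exact hmem
              · rw [Finset.mem_singleton.mp hl]; exact hjm
            have h3 := Finset.sum_le_sum_of_subset hsub (f := fun l => d l)
            rwa [Finset.sum_pair (fun h => hj h.symm)] at h3
          omega
      rw [hd']
      exact Finset.mem_insert_of_mem (Finset.mem_image_of_mem _ (Finset.mem_univ i))
  rw [eval_eq']
  rw [Finset.sum_subset hsupp (fun d _ hd => by
    rw [MvPolynomial.notMem_support_iff.mp hd, zero_mul])]
  have hnotmem : (0 : Fin k →₀ ℕ) ∉ Finset.univ.image fun i => Finsupp.single i 1 := by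
    rw [Finset.mem_image]
    rintro ⟨i, -, hi⟩
    exact one_ne_zero (Finsupp.single_eq_zero.mp hi)
  rw [Finset.sum_insert hnotmem,
    Finset.sum_image (fun a _ b _ h => Finsupp.single_left_injective one_ne_zero h)]
  congr 1
  · simp
  · refine Finset.sum_congr rfl fun i _ => ?_
    congr 1
    rw [Finset.prod_eq_single i
      (fun j _ hj => by rw [Finsupp.single_apply, if_neg (fun h => hj h.symm), pow_zero])
      (by simp)]
    simp

lemma exists_aff {k : ℕ} (p : MvPolynomial (Fin k) ℝ) (hp : p.totalDegree ≤ 1) :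
    ∃ g : (Fin k → ℝ) →ᵃ[ℝ] ℝ, ∀ x, g x = MvPolynomial.eval x p := by
  classical
  refine ⟨{ toFun := fun x => MvPolynomial.eval x p,
            linear := ∑ i, p.coeff (Finsupp.single i 1) • LinearMap.proj i,
            map_vadd' := ?_ }, fun x => rfl⟩
  intro x v
  simp only [vadd_eq_add]
  rw [eval_deg_le_one p hp, eval_deg_le_one p hp x, LinearMap.sum_apply]
  simp only [LinearMap.smul_apply, LinearMap.proj_apply, smul_eq_mul, Pi.add_apply, mul_add]
  rw [Finset.sum_add_distrib]
  ring

theorem stmt5 (k s : ℕ) (hk : 1 ≤ k) (hs : 1 ≤ s)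
    (P : Fin s → MvPolynomial (Fin k) ℝ) (hP : ∀ i, (P i).totalDegree ≤ 1) :
    (∀ σ : Fin s → SignType, Finite (ConnectedComponents ↥(SignRealization P σ))) ∧
    (∑ σ : Fin s → SignType, Nat.card (ConnectedComponents ↥(SignRealization P σ)))
      ≤ ∑ i ∈ Finset.range (k + 1), ∑ j ∈ Finset.range (k - i + 1),
          s.choose i * (s - i).choose j := by
  classical
  choose g hg using fun i => exists_aff (P i) (hP i)
  have hSR : ∀ σ, SignRealization P σ = SCa g σ :=
    fun σ => Set.ext fun x => forall_congr' fun i => by rw [hg i x]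
  have hsub : ∀ σ, (SCa g σ).Nonempty →
      Subsingleton (ConnectedComponents ↥(SCa g σ)) := by
    intro σ _
    haveI : PreconnectedSpace ↥(SCa g σ) :=
      Subtype.preconnectedSpace (SCa_convex g σ).isPreconnected
    constructor
    intro a b
    obtain ⟨u, rfl⟩ := ConnectedComponents.surjective_coe a
    obtain ⟨w, rfl⟩ := ConnectedComponents.surjective_coe b
    rw [ConnectedComponents.coe_eq_coe, PreconnectedSpace.connectedComponent_eq_univ,
      PreconnectedSpace.connectedComponent_eq_univ]
  have hsub' : ∀ σ, Subsingleton (ConnectedComponents ↥(SCa g σ)) := by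
    intro σ
    by_cases hne : (SCa g σ).Nonempty
    · exact hsub σ hne
    · rw [Set.not_nonempty_iff_eq_empty] at hne
      rw [hne]
      haveI : IsEmpty (ConnectedComponents ↥(∅ : Set (Fin k → ℝ))) := by
        constructor
        intro a
        obtain ⟨u, -⟩ := ConnectedComponents.surjective_coe a
        exact IsEmpty.false u
      infer_instance
  constructor
  · intro σ
    rw [hSR σ]
    haveI := hsub' σ
    exact Finite.of_subsingleton
  · have hbound : ∀ σ : Fin s → SignType,
        Nat.card (ConnectedComponents ↥(SignRealization P σ))
          ≤ if (SCa g σ).Nonempty then 1 else 0 := by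
      intro σ
      rw [hSR σ]
      by_cases hne : (SCa g σ).Nonempty
      · rw [if_pos hne]
        haveI := hsub' σ
        haveI : Finite (ConnectedComponents ↥(SCa g σ)) := Finite.of_subsingleton
        exact Finite.card_le_one_iff_subsingleton.mpr (hsub' σ)
      · rw [if_neg hne]
        rw [Set.not_nonempty_iff_eq_empty] at hne
        rw [hne]
        haveI : IsEmpty (ConnectedComponents ↥(∅ : Set (Fin k → ℝ))) := by
          constructor
          intro a
          obtain ⟨u, -⟩ := ConnectedComponents.surjective_coe a
          exact IsEmpty.false u
        exact le_of_eq Nat.card_of_isEmpty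
    calc ∑ σ : Fin s → SignType, Nat.card (ConnectedComponents ↥(SignRealization P σ))
        ≤ ∑ σ : Fin s → SignType, (if (SCa g σ).Nonempty then 1 else 0) :=
          Finset.sum_le_sum fun σ _ => hbound σ
      _ = (Finset.univ.filter fun σ : Fin s → SignType => (SCa g σ).Nonempty).card :=
          (Finset.card_filter _ _).symm
      _ = cnt g := (cnt_eq g).symm
      _ ≤ gg s (Module.finrank ℝ (Fin k → ℝ)) := cnt_le s _ g
      _ = gg s k := by rw [Module.finrank_fin_fun]
      _ = ∑ i ∈ Finset.range (k + 1), ∑ j ∈ Finset.range (k - i + 1),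
          s.choose i * (s - i).choose j := by
          rw [gg]
          exact Finset.sum_congr rfl fun i _ => by rw [hh, Finset.mul_sum]
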